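/- Let N ≥ 2, let λ ∈ ℝ with λ ≠ 0, let x lie in the interior of C_N^A, and let φ : [0,∞) → ℝ^N be a continuously differentiable function taking values in the interior of C_N^A with φ(0) = x that solves the ODE of type A_{N−1}. Then the function ψ(t) := e^{−λt} · φ( (e^{2λt} − 1)/(2λ) ) is well defined on [0,∞) (the time argument is nonnegative for both signs of λ), satisfies ψ(0) = x, takes values in the interior of C_N^A, and solves the ODE with mean reversion: ψ_i'(t) = ∑_{j≠i} 1/(ψ_i(t) − ψ_j(t)) − λ·ψ_i(t) for all i = 1,…,N and all t ≥ 0. -/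

import Mathlib

open scoped BigOperators

noncomputable section

/-- The interior of the closed Weyl chamber of type A. -/
def interiorA {N : ℕ} (x : Fin N → ℝ) : Prop := StrictAnti x

/-- `φ` solves the ODE of type `A_{N-1}` on `[0,∞)`. -/
def solvesA {N : ℕ} (φ : ℝ → Fin N → ℝ) : Prop :=
  ∀ t ∈ Set.Ici (0:ℝ), ∀ i : Fin N,
    HasDerivWithinAt (fun s => φ s i)
      (∑ j ∈ Finset.univ.erase i, 1 / (φ t i - φ t j)) (Set.Ici 0) t

/-- Space-time transformation to the mean-reverting case: if `φ` solves the ODE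
of type `A_{N-1}` with `φ(0) = x` in the interior of `C_N^A`, then
`ψ(t) = e^{-λt}·φ((e^{2λt}-1)/(2λ))` is well defined (the time argument is
nonnegative for both signs of `λ`), starts at `x`, stays in the interior of
`C_N^A`, and solves `ψ_i' = ∑_{j≠i} 1/(ψ_i - ψ_j) - λψ_i`. -/
theorem statement17 (N : ℕ) (hN : 2 ≤ N) (lam : ℝ) (hlam : lam ≠ 0)
    (x : Fin N → ℝ) (hx : interiorA x)
    (φ : ℝ → Fin N → ℝ) (hφ0 : φ 0 = x)
    (hint : ∀ t ∈ Set.Ici (0:ℝ), interiorA (φ t))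
    (hode : solvesA φ) :
    (∀ t ∈ Set.Ici (0:ℝ), (Real.exp (2*lam*t) - 1)/(2*lam) ∈ Set.Ici (0:ℝ)) ∧
    ((fun i => Real.exp (-lam*0) * φ ((Real.exp (2*lam*0) - 1)/(2*lam)) i) = x) ∧
    (∀ t ∈ Set.Ici (0:ℝ),
      interiorA (fun i => Real.exp (-lam*t) * φ ((Real.exp (2*lam*t) - 1)/(2*lam)) i)) ∧
    (∀ t ∈ Set.Ici (0:ℝ), ∀ i : Fin N,
      HasDerivWithinAt
        (fun s => Real.exp (-lam*s) * φ ((Real.exp (2*lam*s) - 1)/(2*lam)) i)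
        ((∑ j ∈ Finset.univ.erase i,
            1 / (Real.exp (-lam*t) * φ ((Real.exp (2*lam*t) - 1)/(2*lam)) i
              - Real.exp (-lam*t) * φ ((Real.exp (2*lam*t) - 1)/(2*lam)) j))
          - lam * (Real.exp (-lam*t) * φ ((Real.exp (2*lam*t) - 1)/(2*lam)) i))
        (Set.Ici 0) t) := by
  have hle : ∀ t ∈ Set.Ici (0:ℝ), (Real.exp (2*lam*t) - 1)/(2*lam) ∈ Set.Ici (0:ℝ) := by
    intro t ht
    simp only [Set.mem_Ici] at *
    rcases lt_or_gt_of_ne hlam with h | h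
    · have h1 : Real.exp (2*lam*t) ≤ 1 := Real.exp_le_one_iff.mpr (by nlinarith)
      exact div_nonneg_iff.mpr (Or.inr ⟨by linarith, by linarith⟩)
    · apply div_nonneg
      · have : 1 ≤ Real.exp (2*lam*t) := Real.one_le_exp (by nlinarith)
        linarith
      · linarith
  refine ⟨hle, ?_, ?_, ?_⟩
  · funext i
    simp [hφ0]
  · intro t ht i j hij
    exact mul_lt_mul_of_pos_left (hint _ (hle t ht) hij) (Real.exp_pos _)
  · intro t ht i
    set τ := (Real.exp (2*lam*t) - 1)/(2*lam) with hτdef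
    have hτ : τ ∈ Set.Ici (0:ℝ) := hle t ht
    have hg : HasDerivWithinAt (fun s => (Real.exp (2*lam*s) - 1)/(2*lam))
        (Real.exp (2*lam*t)) (Set.Ici 0) t := by
      have h1 : HasDerivAt (fun s : ℝ => 2*lam*s) (2*lam) t := by
        simpa using (hasDerivAt_id t).const_mul (2*lam)
      have h2 := (h1.exp.sub_const 1).div_const (2*lam)
      have : Real.exp (2*lam*t) * (2*lam) / (2*lam) = Real.exp (2*lam*t) := by
        field_simp
      rw [this] at h2
      exact h2.hasDerivWithinAt
    have hmaps : Set.MapsTo (fun s => (Real.exp (2*lam*s) - 1)/(2*lam))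
        (Set.Ici (0:ℝ)) (Set.Ici (0:ℝ)) := fun s hs => hle s hs
    set A := ∑ j ∈ Finset.univ.erase i, 1 / (φ τ i - φ τ j) with hA
    have hcomp : HasDerivWithinAt (fun s => φ ((Real.exp (2*lam*s) - 1)/(2*lam)) i)
        (A * Real.exp (2*lam*t)) (Set.Ici 0) t := by
      have := HasDerivWithinAt.comp t (hode τ hτ i) hg hmaps
      exact this
    have he : HasDerivWithinAt (fun s : ℝ => Real.exp (-lam*s))
        (-lam * Real.exp (-lam*t)) (Set.Ici 0) t := by
      have h1 : HasDerivAt (fun s : ℝ => -lam*s) (-lam) t := by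
        simpa using (hasDerivAt_id t).const_mul (-lam)
      have := h1.exp
      rw [mul_comm] at this
      exact this.hasDerivWithinAt
    have key : HasDerivWithinAt
        (fun s => Real.exp (-lam*s) * φ ((Real.exp (2*lam*s) - 1)/(2*lam)) i)
        (-lam * Real.exp (-lam*t) * φ ((Real.exp (2*lam*t) - 1)/(2*lam)) i
          + Real.exp (-lam*t) * (A * Real.exp (2*lam*t))) (Set.Ici 0) t := he.mul hcomp
    convert key using 1
    have hsum : (∑ j ∈ Finset.univ.erase i,
        1 / (Real.exp (-lam*t) * φ τ i - Real.exp (-lam*t) * φ τ j))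
        = Real.exp (lam*t) * A := by
      rw [hA, Finset.mul_sum]
      refine Finset.sum_congr rfl fun j hj => ?_
      rw [← mul_sub, one_div, one_div, mul_inv, ← Real.exp_neg]
      ring_nf
    rw [hsum]
    have hexp : Real.exp (-lam*t) * Real.exp (2*lam*t) = Real.exp (lam*t) := by
      rw [← Real.exp_add]; ring_nf
    rw [← hexp]
    ring
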